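/- A sequence m ∈ ℤ^{k+1} is a path for q > 0 if and only if P_ℓ(q,m) ≠ 0 for all 0 ≤ ℓ < k; in that case m is a loop if and only if P_k(q,m) = 0, and the weight satisfies w_q(m) = |q^{-k/2} · Q_k(q,m)|. -/

import Mathlib

/-- `cfF q m j = c(q, (m₀,…,m_j))`. -/
noncomputable def cfF (q : ℝ) (m : ℕ → ℤ) : ℕ → ℝ
  | 0 => (m 0 : ℝ)
  | j + 1 => (m (j + 1) : ℝ) + 1 / (q * cfF q m j)

/-- `(m₀,…,m_k)` is a path for `q`: all denominators nonzero. -/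
def IsPathF (q : ℝ) (m : ℕ → ℤ) (k : ℕ) : Prop := ∀ j < k, cfF q m j ≠ 0

/-- the weight `q^{k/2} ∏_{j<k} |c(q, m_j)|`. -/
noncomputable def weightF (q : ℝ) (m : ℕ → ℤ) (k : ℕ) : ℝ :=
  Real.sqrt (q ^ k) * ∏ j ∈ Finset.range k, |cfF q m j|

/-- the pair of polynomials `(P_ℓ(x, m), Q_ℓ(x, m))`. -/
noncomputable def PQ (m : ℕ → ℤ) : ℕ → Polynomial ℤ × Polynomial ℤ
  | 0 => (Polynomial.C (m 0), 1)
  | l + 1 => (Polynomial.C (m (l + 1)) * Polynomial.X * (PQ m l).1 + (PQ m l).2,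
      Polynomial.X * (PQ m l).1)

lemma keyA (q : ℝ) (hq : 0 < q) (m : ℕ → ℤ) :
    ∀ l, (∀ j < l, cfF q m j ≠ 0) →
      ((Polynomial.aeval q ((PQ m l).2) : ℝ) ≠ 0 ∧
       cfF q m l * Polynomial.aeval q ((PQ m l).2) = Polynomial.aeval q ((PQ m l).1)) := by
  intro l
  induction l with
  | zero => intro _; simp [cfF, PQ]
  | succ l ih =>
    intro h
    obtain ⟨hQ, hPQ⟩ := ih (fun j hj => h j (Nat.lt_succ_of_lt hj))
    have hc : cfF q m l ≠ 0 := h l (Nat.lt_succ_self l)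
    have hP : (Polynomial.aeval q ((PQ m l).1) : ℝ) ≠ 0 := by
      rw [← hPQ]; exact mul_ne_zero hc hQ
    constructor
    · show (Polynomial.aeval q ((Polynomial.X : Polynomial ℤ) * (PQ m l).1) : ℝ) ≠ 0
      simp only [map_mul, Polynomial.aeval_X]
      exact mul_ne_zero hq.ne' hP
    · show cfF q m (l + 1) * Polynomial.aeval q ((Polynomial.X : Polynomial ℤ) * (PQ m l).1)
        = Polynomial.aeval q (Polynomial.C (m (l+1)) * Polynomial.X * (PQ m l).1 + (PQ m l).2)
      simp only [map_mul, map_add, Polynomial.aeval_X, Polynomial.aeval_C,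
        eq_intCast, map_intCast, cfF]
      rw [← hPQ]
      field_simp

lemma keyB (q : ℝ) (hq : 0 < q) (m : ℕ → ℤ) :
    ∀ k, (∀ j < k, cfF q m j ≠ 0) →
      (Polynomial.aeval q ((PQ m k).2) : ℝ) = q ^ k * ∏ j ∈ Finset.range k, cfF q m j := by
  intro k
  induction k with
  | zero => intro _; simp [PQ]
  | succ k ih =>
    intro h
    obtain ⟨hQ, hPQ⟩ := keyA q hq m k (fun j hj => h j (Nat.lt_succ_of_lt hj))
    show (Polynomial.aeval q ((Polynomial.X : Polynomial ℤ) * (PQ m k).1) : ℝ) = _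
    simp only [map_mul, Polynomial.aeval_X]
    rw [← hPQ, ih (fun j hj => h j (Nat.lt_succ_of_lt hj)), Finset.prod_range_succ, pow_succ]
    ring

theorem stmt17 (q : ℝ) (hq : 0 < q) (m : ℕ → ℤ) (k : ℕ) :
    (IsPathF q m k ↔ ∀ l < k, Polynomial.aeval q ((PQ m l).1) ≠ 0) ∧
    (IsPathF q m k → (cfF q m k = 0 ↔ Polynomial.aeval q ((PQ m k).1) = 0)) ∧
    (IsPathF q m k →
      weightF q m k = |(Real.sqrt (q ^ k))⁻¹ * Polynomial.aeval q ((PQ m k).2)|) := by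
  refine ⟨⟨fun hp l hl => ?_, fun hp => ?_⟩, fun hp => ?_, fun hp => ?_⟩
  · obtain ⟨hQ, hPQ⟩ := keyA q hq m l (fun j hj => hp j (hj.trans hl))
    rw [← hPQ]
    exact mul_ne_zero (hp l hl) hQ
  · intro l hl
    induction l using Nat.strong_induction_on with
    | _ l ih =>
      have hprefix : ∀ j < l, cfF q m j ≠ 0 := fun j hj => ih j hj (hj.trans hl)
      obtain ⟨hQ, hPQ⟩ := keyA q hq m l hprefix
      intro hc
      exact hp l hl (by rw [← hPQ, hc, zero_mul])
  · obtain ⟨hQ, hPQ⟩ := keyA q hq m k hp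
    constructor
    · intro hc; rw [← hPQ, hc, zero_mul]
    · intro hP
      rcases mul_eq_zero.mp (hPQ.trans hP) with h | h
      · exact h
      · exact absurd h hQ
  · have hB := keyB q hq m k hp
    have hs : Real.sqrt (q ^ k) * Real.sqrt (q ^ k) = q ^ k :=
      Real.mul_self_sqrt (pow_nonneg hq.le k)
    have hspos : 0 < Real.sqrt (q ^ k) := Real.sqrt_pos.mpr (pow_pos hq k)
    rw [hB, weightF, abs_mul, abs_mul, Finset.abs_prod, abs_of_pos (pow_pos hq k),
      abs_of_pos (inv_pos.mpr hspos)]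
    rw [← hs]
    field_simp
    rw [Real.sqrt_sq hspos.le]
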